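/- (Reachable sets on sides are intervals.) Assume D_ε ∩ D(i,j) is convex for each cell, and g↓ is the set of points of D_ε mutually reachable with the bottom side B via monotonic paths. Then for every cell (i,j), the set g↓ ∩ T(i,j) (bottom-reachable points on the top side of the cell) is a connected subset of T(i,j), i.e., an interval. -/
import Mathlib


open Set

/-- A monotonic path in a free space `S`: a connected subset of `S` such that
`(u - u')*(v - v') ≥ 0` for any two of its points. -/
def MonotonicPath (S γ : Set (ℝ × ℝ)) : Prop :=
  γ ⊆ S ∧ IsConnected γ ∧ ∀ p ∈ γ, ∀ q ∈ γ, (p.1 - q.1) * (p.2 - q.2) ≥ 0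

/-- Two points are mutually reachable if some monotonic path contains both. -/
def MutuallyReachable (S : Set (ℝ × ℝ)) (p q : ℝ × ℝ) : Prop :=
  ∃ γ : Set (ℝ × ℝ), MonotonicPath S γ ∧ p ∈ γ ∧ q ∈ γ

/-- helper: a closed-cover splitting of a preconnected set is preconnected when
the two closed pieces meet the set in at most one common point. -/
lemma aux_false {X A B t t' : Set (ℝ × ℝ)} {a : ℝ × ℝ}
    (hX : IsPreconnected X) (hA : IsClosed A) (hB : IsClosed B)
    (hcov : X ⊆ A ∪ B) (haX : a ∈ X) (haA : a ∈ A)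
    (hAB : X ∩ A ∩ B ⊆ {a})
    (ht : IsClosed t) (ht' : IsClosed t')
    (hcov2 : X ∩ A ⊆ t ∪ t')
    (hne' : (X ∩ A ∩ t').Nonempty)
    (hat : a ∈ t)
    (hempty : X ∩ A ∩ (t ∩ t') = ∅) : False := by
  have hat' : a ∉ t' := by
    intro h
    have : a ∈ X ∩ A ∩ (t ∩ t') := ⟨⟨haX, haA⟩, hat, h⟩
    rw [hempty] at this; exact this
  have := (isPreconnected_closed_iff.mp hX) (A ∩ t') ((A ∩ t) ∪ B)
    (hA.inter ht') ((hA.inter ht).union hB)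
    (by
      intro x hx
      rcases hcov hx with hxA | hxB
      · rcases hcov2 ⟨hx, hxA⟩ with h | h
        · exact Or.inr (Or.inl ⟨hxA, h⟩)
        · exact Or.inl ⟨hxA, h⟩
      · exact Or.inr (Or.inr hxB))
    (by obtain ⟨x, ⟨hxX, hxA⟩, hxt'⟩ := hne'; exact ⟨x, hxX, hxA, hxt'⟩)
    ⟨a, haX, Or.inl ⟨haA, hat⟩⟩
  obtain ⟨x, hxX, ⟨hxA, hxt'⟩, hrest⟩ := this
  rcases hrest with ⟨_, hxt⟩ | hxB
  · have : x ∈ X ∩ A ∩ (t ∩ t') := ⟨⟨hxX, hxA⟩, hxt, hxt'⟩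
    rw [hempty] at this; exact this
  · have : x = a := hAB ⟨⟨hxX, hxA⟩, hxB⟩
    exact hat' (this ▸ hxt')

lemma preconn_inter_closed {X A B : Set (ℝ × ℝ)} {a : ℝ × ℝ}
    (hX : IsPreconnected X) (hA : IsClosed A) (hB : IsClosed B)
    (hcov : X ⊆ A ∪ B) (haX : a ∈ X) (haA : a ∈ A)
    (hAB : X ∩ A ∩ B ⊆ {a}) : IsPreconnected (X ∩ A) := by
  rw [isPreconnected_closed_iff]
  intro t t' ht ht' hcov2 hne hne'
  by_contra h
  rw [Set.not_nonempty_iff_eq_empty] at h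
  rcases hcov2 ⟨haX, haA⟩ with hat | hat'
  · exact (aux_false hX hA hB hcov haX haA hAB ht ht' hcov2 hne' hat h).elim
  · have h' : X ∩ A ∩ (t' ∩ t) = ∅ := by rw [Set.inter_comm t' t]; exact h
    have hcov2' : X ∩ A ⊆ t' ∪ t := by rw [Set.union_comm]; exact hcov2
    exact (aux_false hX hA hB hcov haX haA hAB ht' ht hcov2' hne hat' h').elim

lemma mono_total {γ : Set (ℝ × ℝ)}
    (h : ∀ p ∈ γ, ∀ q ∈ γ, (p.1 - q.1) * (p.2 - q.2) ≥ 0)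
    {p q : ℝ × ℝ} (hp : p ∈ γ) (hq : q ∈ γ) : p ≤ q ∨ q ≤ p := by
  have H := h p hp q hq
  rcases le_total p.1 q.1 with h1 | h1 <;> rcases le_total p.2 q.2 with h2 | h2
  · exact Or.inl ⟨h1, h2⟩
  · rcases eq_or_lt_of_le h1 with he | hl
    · exact Or.inr ⟨he.ge, h2⟩
    · exact Or.inl ⟨h1, by nlinarith⟩
  · rcases eq_or_lt_of_le h1 with he | hl
    · exact Or.inl ⟨he.ge, h2⟩
    · exact Or.inr ⟨h1, by nlinarith⟩
  · exact Or.inr ⟨h1, h2⟩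

/-- The bottom-reachable points on the top side of a cell form an interval. -/
theorem gDown_top_side_interval (m n : ℕ) (Dε : Set (ℝ × ℝ))
    (hD : Dε ⊆ Icc ((0 : ℝ), (0 : ℝ)) (2 * (m : ℝ), (n : ℝ)))
    (hcell : ∀ i j : ℕ, 1 ≤ i → i ≤ 2 * m → 1 ≤ j → j ≤ n →
      Convex ℝ (Dε ∩ Icc (((i : ℝ) - 1), ((j : ℝ) - 1)) ((i : ℝ), (j : ℝ))))
    (gDown : Set (ℝ × ℝ))
    (hg : gDown = {p : ℝ × ℝ | ∃ u : ℝ, MutuallyReachable Dε p (u, 0)})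
    (i j : ℕ) (hi1 : 1 ≤ i) (hi2 : i ≤ 2 * m) (hj1 : 1 ≤ j) (hj2 : j ≤ n) :
    ∀ u₁ u₂ u : ℝ,
      (u₁, (j : ℝ)) ∈ gDown ∩ Icc (((i : ℝ) - 1), (j : ℝ)) ((i : ℝ), (j : ℝ)) →
      (u₂, (j : ℝ)) ∈ gDown ∩ Icc (((i : ℝ) - 1), (j : ℝ)) ((i : ℝ), (j : ℝ)) →
      u₁ ≤ u → u ≤ u₂ →
      (u, (j : ℝ)) ∈ gDown ∩ Icc (((i : ℝ) - 1), (j : ℝ)) ((i : ℝ), (j : ℝ)) := by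
  subst hg
  intro u₁ u₂ u h1 h2 hle1 hle2
  obtain ⟨hg1, hc1⟩ := h1
  obtain ⟨hg2, hc2⟩ := h2
  obtain ⟨w, γ₁, ⟨hsub, hconn, hmono⟩, hp1, hw⟩ := hg1
  obtain ⟨w2, γ₂, ⟨hsub2, _, _⟩, hp2, _⟩ := hg2
  have hj1' : (1 : ℝ) ≤ (j : ℝ) := by exact_mod_cast hj1
  -- cell Icc bounds for u₁, u₂
  have hcb1 : ((i : ℝ) - 1) ≤ u₁ ∧ u₁ ≤ (i : ℝ) := ⟨hc1.1.1, hc1.2.1⟩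
  have hcb2 : ((i : ℝ) - 1) ≤ u₂ ∧ u₂ ≤ (i : ℝ) := ⟨hc2.1.1, hc2.2.1⟩
  have hconv := hcell i j hi1 hi2 hj1 hj2
  have hm1 : (u₁, (j : ℝ)) ∈ Dε ∩ Icc (((i : ℝ) - 1), ((j : ℝ) - 1)) ((i : ℝ), (j : ℝ)) :=
    ⟨hsub hp1, ⟨hcb1.1, show ((j:ℝ) - 1) ≤ (j:ℝ) by linarith⟩, ⟨hcb1.2, le_refl _⟩⟩
  have hm2 : (u₂, (j : ℝ)) ∈ Dε ∩ Icc (((i : ℝ) - 1), ((j : ℝ) - 1)) ((i : ℝ), (j : ℝ)) :=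
    ⟨hsub2 hp2, ⟨hcb2.1, show ((j:ℝ) - 1) ≤ (j:ℝ) by linarith⟩, ⟨hcb2.2, le_refl _⟩⟩
  have hu12 : u₁ ≤ u₂ := le_trans hle1 hle2
  -- lifting: every point (s, j) with u₁ ≤ s ≤ u₂ is in the free cell
  have hlift : ∀ s : ℝ, u₁ ≤ s → s ≤ u₂ →
      (s, (j : ℝ)) ∈ Dε ∩ Icc (((i : ℝ) - 1), ((j : ℝ) - 1)) ((i : ℝ), (j : ℝ)) := by
    intro s hs1 hs2
    apply hconv.segment_subset hm1 hm2
    have hs : s ∈ segment ℝ u₁ u₂ := by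
      rw [segment_eq_Icc hu12]; exact ⟨hs1, hs2⟩
    obtain ⟨c, d, hc, hd, hcd, hsum⟩ := hs
    refine ⟨c, d, hc, hd, hcd, ?_⟩
    simp only [Prod.smul_mk, smul_eq_mul, Prod.mk_add_mk, Prod.mk.injEq]
    exact ⟨hsum, by nlinarith⟩
  set a : ℝ × ℝ := (u₁, (j : ℝ)) with ha
  set seg : Set (ℝ × ℝ) := segment ℝ (u₁, (j : ℝ)) (u, (j : ℝ)) with hsegdef
  have hseg : ∀ p ∈ seg, p.2 = (j : ℝ) ∧ u₁ ≤ p.1 ∧ p.1 ≤ u := by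
    rintro p ⟨c, d, hc, hd, hcd, rfl⟩
    simp only [Prod.smul_mk, smul_eq_mul, Prod.mk_add_mk]
    refine ⟨by nlinarith, by nlinarith, by nlinarith⟩
  set Γ : Set (ℝ × ℝ) := (γ₁ ∩ Iic a) ∪ seg with hΓ
  -- the old path is "below" a at the relevant points
  have hwle : ((w, 0) : ℝ × ℝ) ≤ a := by
    have H := hmono (w, 0) hw (u₁, (j : ℝ)) hp1
    simp only at H
    exact ⟨show w ≤ u₁ by nlinarith, show (0:ℝ) ≤ (j:ℝ) by linarith⟩
  have haseg : a ∈ seg := left_mem_segment ℝ _ _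
  have hadown : a ∈ γ₁ ∩ Iic a := ⟨hp1, le_refl a⟩
  -- Γ is a monotonic path
  have hΓsub : Γ ⊆ Dε := by
    rintro p (hp | hp)
    · exact hsub hp.1
    · obtain ⟨h2, hl, hr⟩ := hseg p hp
      have : (p.1, (j : ℝ)) ∈ Dε ∩ _ := hlift p.1 hl (le_trans hr hle2)
      have hpe : p = (p.1, (j : ℝ)) := Prod.ext rfl h2
      rw [hpe]; exact this.1
  have hΓconn : IsConnected Γ := by
    apply IsConnected.union ⟨a, hadown, haseg⟩
    · refine ⟨⟨a, hadown⟩, ?_⟩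
      apply preconn_inter_closed hconn.isPreconnected isClosed_Iic isClosed_Ici
        (fun p hp => mono_total hmono hp hp1) hp1 (le_refl a)
      rintro p ⟨⟨_, h1⟩, h2⟩
      exact le_antisymm h1 h2
    · exact ⟨⟨a, haseg⟩, (convex_segment _ _).isPreconnected⟩
  have hΓmono : ∀ p ∈ Γ, ∀ q ∈ Γ, (p.1 - q.1) * (p.2 - q.2) ≥ 0 := by
    rintro p (hp | hp) q (hq | hq)
    · exact hmono p hp.1 q hq.1
    · obtain ⟨hq2, hql, _⟩ := hseg q hq
      have hpa : p ≤ a := hp.2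
      have h1 : p.1 ≤ u₁ := hpa.1
      have h2 : p.2 ≤ (j : ℝ) := hpa.2
      rw [hq2]; nlinarith
    · obtain ⟨hp2, hpl, _⟩ := hseg p hp
      have hqa : q ≤ a := hq.2
      have h1 : q.1 ≤ u₁ := hqa.1
      have h2 : q.2 ≤ (j : ℝ) := hqa.2
      rw [hp2]; nlinarith
    · rw [(hseg p hp).1, (hseg q hq).1]; simp
  refine ⟨⟨w, Γ, ⟨hΓsub, hΓconn, hΓmono⟩, ?_, ?_⟩, ?_⟩
  · exact Or.inr (right_mem_segment ℝ _ _)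
  · exact Or.inl ⟨hw, hwle⟩
  · exact ⟨⟨show ((i:ℝ) - 1) ≤ u by linarith [hcb1.1], le_refl _⟩, ⟨show u ≤ (i:ℝ) by linarith [hcb2.2], le_refl _⟩⟩
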